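/- Let V ≠ {0} be a normed vector space, X ≠ {0} a Banach space, and E a Banach sequence space with c₀₀(X) ⊆ E. If the set A_{V,E} = {u : V → E : u linear, continuous and non-injective} is nonzero (contains a nonzero element), then A_{V,E} is (1, β)-spaceable, where β = max{𝔠, dim X}: for each nonzero v ∈ A_{V,E}, there is a closed subspace W of L(V, E) with dim W ≥ β, v ∈ W, and W ⊆ A_{V,E} ∪ {0}. -/

import Mathlib

universe u

open Set Submodule

/-- Separation of a point from a closed subspace by a continuous functional. -/
lemma aux_sep {F : Type*} [NormedAddCommGroup F] [NormedSpace ℝ F]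
    (S : Submodule ℝ F) (hS : IsClosed (S : Set F)) {x : F} (hx : x ∉ S) :
    ∃ f : F →L[ℝ] ℝ, (∀ a ∈ S, f a = 0) ∧ f x = 1 := by
  obtain ⟨f, u, hfS, hux⟩ := geometric_hahn_banach_closed_point S.convex hS hx
  have h0 : (0 : ℝ) < u := by simpa using hfS 0 S.zero_mem
  have hS0 : ∀ a ∈ S, f a = 0 := by
    intro a ha
    by_contra h
    have := hfS (((u + 1) / f a) • a) (S.smul_mem _ ha)
    rw [map_smul, smul_eq_mul, div_mul_cancel₀ _ h] at this
    linarith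
  have hfx : f x ≠ 0 := ne_of_gt (h0.trans hux)
  refine ⟨(f x)⁻¹ • f, fun a ha => ?_, ?_⟩
  · simp [hS0 a ha]
  · simp [inv_mul_cancel₀ hfx]

/-- Biorthogonalization. -/
noncomputable def bio {F : Type*} [NormedAddCommGroup F] [NormedSpace ℝ F]
    (e : ℕ → F) (f : ℕ → F →L[ℝ] ℝ) : ℕ → F
  | n => e n - ∑ m ∈ (Finset.range n).attach, f m.1 (e n) • bio e f m.1
  decreasing_by exact Finset.mem_range.mp m.2

lemma bio_def {F : Type*} [NormedAddCommGroup F] [NormedSpace ℝ F]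
    (e : ℕ → F) (f : ℕ → F →L[ℝ] ℝ) (n : ℕ) :
    bio e f n = e n - ∑ m ∈ Finset.range n, f m (e n) • bio e f m := by
  rw [bio]
  congr 1
  exact Finset.sum_attach (Finset.range n) (fun m => f m (e n) • bio e f m)

/-- For V ≠ {0} normed, X ≠ {0} Banach, E a Banach sequence space with
c₀₀(X) ⊆ E, the set of non-injective continuous linear operators V → E is
(1, β)-spaceable with β = max{𝔠, dim X}. -/
theorem stmt11 {V X E : Type u}
    [NormedAddCommGroup V] [NormedSpace ℝ V] [Nontrivial V]
    [NormedAddCommGroup X] [NormedSpace ℝ X] [CompleteSpace X] [Nontrivial X]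
    [NormedAddCommGroup E] [NormedSpace ℝ E] [CompleteSpace E]
    (coord : E →ₗ[ℝ] (ℕ → X))
    (hinj : Function.Injective coord)
    (hc00 : ∀ f : ℕ → X, (Function.support f).Finite → f ∈ Set.range coord)
    (v : V →L[ℝ] E) (hv : v ≠ 0) (hninj : ¬ Function.Injective ⇑v) :
    ∃ W : Submodule ℝ (V →L[ℝ] E),
      IsClosed (W : Set (V →L[ℝ] E)) ∧
      max Cardinal.continuum (Module.rank ℝ X) ≤ Module.rank ℝ W ∧
      v ∈ W ∧ ∀ u ∈ W, u ≠ 0 → ¬ Function.Injective ⇑u := by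
  classical
  obtain ⟨x₀, hx₀⟩ := exists_ne (0 : X)
  have hsingle : ∀ (n : ℕ) (x : X), (Function.support (Pi.single n x : ℕ → X)).Finite := by
    intro n x
    apply (Set.finite_singleton n).subset
    intro a ha
    rw [Function.mem_support] at ha
    simp only [Set.mem_singleton_iff]
    by_contra h
    exact ha (Pi.single_eq_of_ne (M := fun _ : ℕ => X) h x)
  have he : ∀ n : ℕ, ∃ z : E, coord z = Pi.single n x₀ :=
    fun n => hc00 _ (hsingle n x₀)
  set e : ℕ → E := fun n => (he n).choose with he_def
  have hecoord : ∀ n, coord (e n) = Pi.single n x₀ := fun n => (he n).choose_spec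
  -- linear independence of the coordinate sequences
  have hPi : LinearIndependent ℝ (fun n : ℕ => (Pi.single n x₀ : ℕ → X)) := by
    rw [linearIndependent_iff']
    intro s gcoef hg i hi
    have h1 := congrFun hg i
    simp only [Finset.sum_apply, Pi.smul_apply, Pi.single_apply, Pi.zero_apply,
      smul_ite, smul_zero] at h1
    rw [Finset.sum_ite_eq s i (fun n => gcoef n • x₀), if_pos hi] at h1
    rcases smul_eq_zero.mp h1 with h | h
    · exact h
    · exact absurd h hx₀
  have heind : LinearIndependent ℝ e := by
    apply LinearIndependent.of_comp coord
    have : (⇑coord ∘ e) = fun n => (Pi.single n x₀ : ℕ → X) := funext hecoord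
    rw [this]; exact hPi
  -- the functionals
  set S : ℕ → Submodule ℝ E := fun n => Submodule.span ℝ (e '' Set.Iio n) with hS
  have hSnotmem : ∀ n, e n ∉ S n := fun n =>
    heind.notMem_span_image (by simp)
  have hf : ∀ n, ∃ f : E →L[ℝ] ℝ, (∀ a ∈ S n, f a = 0) ∧ f (e n) = 1 := by
    intro n
    have : FiniteDimensional ℝ (S n) :=
      FiniteDimensional.span_of_finite ℝ ((Set.finite_Iio n).image e)
    exact aux_sep (S n) (S n).closed_of_finiteDimensional (hSnotmem n)
  set f : ℕ → E →L[ℝ] ℝ := fun n => (hf n).choose with hf_def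
  have hf0 : ∀ n, ∀ a ∈ S n, f n a = 0 := fun n => (hf n).choose_spec.1
  have hf1 : ∀ n, f n (e n) = 1 := fun n => (hf n).choose_spec.2
  -- biorthogonal sequence
  set y : ℕ → E := bio e f with hy_def
  have hy : ∀ n, y n = e n - ∑ m ∈ Finset.range n, f m (e n) • y m := bio_def e f
  have hymem : ∀ n, y n ∈ Submodule.span ℝ (e '' Set.Iic n) := by
    intro n
    induction n using Nat.strong_induction_on with
    | _ n ih =>
      rw [hy n]
      refine sub_mem (subset_span ⟨n, by simp, rfl⟩)
        (sum_mem fun m hm => smul_mem _ _ ?_)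
      have hmn := Finset.mem_range.mp hm
      exact span_mono (Set.image_mono (Set.Iic_subset_Iic.mpr hmn.le)) (ih m hmn)
  have hy0 : ∀ n k, n < k → f k (y n) = 0 := by
    intro n k hnk
    apply hf0 k
    refine span_le.mpr ?_ (hymem n)
    rintro z ⟨m, hm, rfl⟩
    exact subset_span ⟨m, lt_of_le_of_lt hm hnk, rfl⟩
  have hyd : ∀ n k, f k (y n) = if k = n then 1 else 0 := by
    intro n
    induction n using Nat.strong_induction_on with
    | _ n ih =>
      intro k
      rcases lt_or_ge n k with h | h
      · rw [hy0 n k h, if_neg (by omega)]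
      · rw [hy n]
        rw [map_sub, map_sum]
        simp only [map_smul, smul_eq_mul]
        have hterm : ∀ m ∈ Finset.range n, f m (e n) * f k (y m)
            = if k = m then f m (e n) else 0 := by
          intro m hm
          rcases lt_or_ge m k with hmk | hmk
          · rw [hy0 m k hmk, mul_zero, if_neg (by omega)]
          · rw [ih m (Finset.mem_range.mp hm) k]
            by_cases hkm : k = m <;> simp [hkm]
        rw [Finset.sum_congr rfl hterm, Finset.sum_ite_eq]
        by_cases hk : k = n
        · subst hk
          rw [if_neg (by simp), sub_zero, hf1, if_pos rfl]
        · rw [if_pos (Finset.mem_range.mpr (lt_of_le_of_ne h hk)), sub_self, if_neg hk]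
  -- coefficients and the continuum family
  set c : ℕ → ℝ := fun n => (1/2 : ℝ)^n * (1 + ‖y n‖)⁻¹ with hc_def
  have hcpos : ∀ n, 0 < c n := by
    intro n
    have : (0:ℝ) < 1 + ‖y n‖ := by positivity
    positivity
  have hsummable : ∀ t : ℝ, t ∈ Set.Ioo (0:ℝ) (1/2) →
      Summable (fun n => (t^n * c n) • y n) := by
    intro t ht
    apply Summable.of_norm_bounded summable_geometric_two
    intro n
    have h1 : (0:ℝ) < 1 + ‖y n‖ := by positivity
    have hyn : (1 + ‖y n‖)⁻¹ * ‖y n‖ ≤ 1 := by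
      rw [inv_mul_le_iff₀ h1]
      nlinarith [norm_nonneg (y n)]
    have htn : t^n ≤ (1/2 : ℝ)^n :=
      pow_le_pow_left₀ ht.1.le ht.2.le n
    have htn0 : (0:ℝ) ≤ t^n := pow_nonneg ht.1.le n
    have h2n : ((1:ℝ)/2)^n ≤ 1 := by
      apply pow_le_one₀ <;> norm_num
    rw [norm_smul, Real.norm_eq_abs, abs_of_pos (mul_pos (pow_pos ht.1 n) (hcpos n))]
    calc t^n * c n * ‖y n‖ = t^n * ((1/2 : ℝ)^n * ((1 + ‖y n‖)⁻¹ * ‖y n‖)) := by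
          rw [hc_def]; ring
      _ ≤ (1/2 : ℝ)^n * ((1:ℝ) * 1) := by
          apply mul_le_mul htn ?_ ?_ (by positivity)
          · apply mul_le_mul h2n hyn (by positivity) (by norm_num)
          · positivity
      _ = (1/2 : ℝ)^n := by ring
  set g : ↥(Set.Ioo (0:ℝ) (1/2)) → E := fun t => ∑' n, ((t:ℝ)^n * c n) • y n with hg_def
  have hfg : ∀ (t : ↥(Set.Ioo (0:ℝ) (1/2))) (m : ℕ), f m (g t) = (t:ℝ)^m * c m := by
    intro t m
    rw [hg_def]
    rw [ContinuousLinearMap.map_tsum (f m) (hsummable t t.2)]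
    rw [tsum_eq_single m ?_]
    · rw [map_smul, hyd m m, if_pos rfl]; simp
    · intro n hnm
      rw [map_smul, hyd n m, if_neg (Ne.symm hnm)]; simp
  set Ψ : E →ₗ[ℝ] (ℕ → ℝ) :=
    LinearMap.pi (fun m => (c m)⁻¹ • ((f m) : E →ₗ[ℝ] ℝ)) with hΨ_def
  have hΨg : ∀ t, Ψ (g t) = fun m : ℕ => (t:ℝ)^m := by
    intro t
    funext m
    rw [hΨ_def]
    simp only [LinearMap.pi_apply, LinearMap.smul_apply, ContinuousLinearMap.coe_coe,
      smul_eq_mul]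
    rw [hfg t m]
    field_simp
    exact mul_div_cancel_left₀ _ (hcpos m).ne'
  -- linear independence of powers (Dedekind)
  have hpow : LinearIndependent ℝ
      (fun t : ↥(Set.Ioo (0:ℝ) (1/2)) => fun m : ℕ => (t:ℝ)^m) := by
    have h1 := linearIndependent_monoidHom (Multiplicative ℕ) ℝ
    have h2 := h1.comp (fun t : ↥(Set.Ioo (0:ℝ) (1/2)) => powersHom ℝ (t:ℝ))
      (fun a b hab => by
        apply Subtype.ext
        have := congrArg (fun fmh : Multiplicative ℕ →* ℝ => (powersHom ℝ).symm fmh) hab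
        simpa using this)
    set eqv : (Multiplicative ℕ → ℝ) ≃ₗ[ℝ] (ℕ → ℝ) :=
      LinearEquiv.funCongrLeft ℝ ℝ (Multiplicative.ofAdd : ℕ ≃ Multiplicative ℕ) with heqv
    have h3 := h2.map' eqv.toLinearMap eqv.ker
    have heq : (fun t : ↥(Set.Ioo (0:ℝ) (1/2)) => fun m : ℕ => (t:ℝ)^m)
        = ⇑eqv.toLinearMap ∘ ((fun fmh : Multiplicative ℕ →* ℝ => (fmh : Multiplicative ℕ → ℝ))
            ∘ (fun t : ↥(Set.Ioo (0:ℝ) (1/2)) => powersHom ℝ (t:ℝ))) := by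
      funext t m
      rfl
    rw [heq]
    exact h3
  have hgind : LinearIndependent ℝ g := by
    apply LinearIndependent.of_comp Ψ
    have : ⇑Ψ ∘ g = fun t : ↥(Set.Ioo (0:ℝ) (1/2)) => fun m : ℕ => (t:ℝ)^m :=
      funext hΨg
    rw [this]
    exact hpow
  -- the operator side
  obtain ⟨a, b, hab, hne⟩ : ∃ a b, v a = v b ∧ a ≠ b :=
    Function.not_injective_iff.mp hninj
  set v₀ : V := a - b with hv₀_def
  have hv₀ : v₀ ≠ 0 := sub_ne_zero.mpr hne
  have hvv₀ : v v₀ = 0 := by rw [hv₀_def, map_sub, hab, sub_self]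
  obtain ⟨w, hw⟩ : ∃ w, v w ≠ 0 := by
    by_contra h
    push_neg at h
    exact hv (ContinuousLinearMap.ext fun z => by simp [h z])
  obtain ⟨ψ, _, hψ⟩ := exists_dual_vector ℝ (v w) (norm_ne_zero_iff.mpr hw)
  set φ : V →L[ℝ] ℝ := ψ.comp v with hφ_def
  have hφw : φ w ≠ 0 := by
    rw [hφ_def]
    simp only [ContinuousLinearMap.comp_apply]
    rw [hψ]
    exact norm_ne_zero_iff.mpr hw
  have hφv₀ : φ v₀ = 0 := by
    rw [hφ_def]
    simp [hvv₀]
  set Φ : E →ₗ[ℝ] (V →L[ℝ] E) :=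
    ((ContinuousLinearMap.smulRightL ℝ V E φ : E →L[ℝ] (V →L[ℝ] E)) :
      E →ₗ[ℝ] (V →L[ℝ] E)) with hΦ_def
  have hΦ_apply : ∀ (z : E) (x : V), Φ z x = φ x • z := fun z x => rfl
  have hΦinj : Function.Injective Φ := by
    intro z₁ z₂ h
    have h2 := congrArg (fun (u : V →L[ℝ] E) => u w) h
    rw [hΦ_apply, hΦ_apply] at h2
    exact smul_right_injective E hφw h2
  set T : (V →L[ℝ] E) →L[ℝ] E := ContinuousLinearMap.apply ℝ E v₀ with hT_def
  have hT : ∀ u : V →L[ℝ] E, T u = u v₀ := fun u => rfl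
  set W : Submodule ℝ (V →L[ℝ] E) := LinearMap.ker (T : (V →L[ℝ] E) →ₗ[ℝ] E) with hW_def
  have hWmem : ∀ u : V →L[ℝ] E, u ∈ W ↔ u v₀ = 0 := by
    intro u
    rw [hW_def, LinearMap.mem_ker, ContinuousLinearMap.coe_coe, hT]
  have hΦW : ∀ z : E, Φ z ∈ W := by
    intro z
    rw [hWmem, hΦ_apply, hφv₀, zero_smul]
  set ΦW : E →ₗ[ℝ] W := LinearMap.codRestrict W Φ hΦW with hΦW_def
  have hΦWinj : Function.Injective ΦW := by
    rw [hΦW_def, ← LinearMap.ker_eq_bot, LinearMap.ker_codRestrict]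
    exact LinearMap.ker_eq_bot.mpr hΦinj
  -- embedding of X
  set j : X →ₗ[ℝ] (ℕ → X) := LinearMap.single ℝ (fun _ : ℕ => X) 0 with hj_def
  have hjapp : ∀ x : X, j x = Pi.single 0 x := fun x => rfl
  have hjrange : ∀ x : X, j x ∈ LinearMap.range coord := by
    intro x
    obtain ⟨z, hz⟩ := hc00 (Pi.single 0 x) (hsingle 0 x)
    exact ⟨z, by rw [hz, hjapp]⟩
  set embX : X →ₗ[ℝ] E :=
    ((LinearEquiv.ofInjective coord hinj).symm : LinearMap.range coord ≃ₗ[ℝ] E).toLinearMap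
      ∘ₗ (LinearMap.codRestrict (LinearMap.range coord) j hjrange) with hembX_def
  have hjinj : Function.Injective j := by
    intro x₁ x₂ h
    have := congrFun (by rw [hjapp, hjapp] at h; exact h : (Pi.single 0 x₁ : ℕ → X) = Pi.single 0 x₂) 0
    simpa using this
  have hembXinj : Function.Injective embX := by
    have h1 : Function.Injective ⇑(LinearMap.codRestrict (LinearMap.range coord) j hjrange) := by
      rw [← LinearMap.ker_eq_bot, LinearMap.ker_codRestrict]
      exact LinearMap.ker_eq_bot.mpr hjinj
    have h2 := (LinearEquiv.ofInjective coord hinj).symm.injective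
    rw [hembX_def, LinearMap.coe_comp]
    exact h2.comp h1
  -- rank bounds
  have hrankX : Module.rank ℝ X ≤ Module.rank ℝ W :=
    LinearMap.rank_le_of_injective (ΦW ∘ₗ embX) (hΦWinj.comp hembXinj)
  have hrankC : Cardinal.continuum ≤ Module.rank ℝ W := by
    have hwind : LinearIndependent ℝ (fun t : ↥(Set.Ioo (0:ℝ) (1/2)) => ΦW (g t)) := by
      have h1 := hgind.map' Φ (LinearMap.ker_eq_bot.mpr hΦinj)
      apply LinearIndependent.of_comp W.subtype
      have : ⇑W.subtype ∘ (fun t : ↥(Set.Ioo (0:ℝ) (1/2)) => ΦW (g t)) = ⇑Φ ∘ g := by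
        funext t; rfl
      rw [this]
      exact h1
    have h2 := hwind.cardinal_lift_le_rank
    rw [Cardinal.mk_Ioo_real (by norm_num : (0:ℝ) < 1/2)] at h2
    rw [Cardinal.lift_continuum, Cardinal.lift_uzero] at h2
    exact h2
  refine ⟨W, ?_, max_le hrankC hrankX, (hWmem v).mpr hvv₀, ?_⟩
  · exact ContinuousLinearMap.isClosed_ker T
  · intro u hu hu0 huinj
    apply hv₀
    apply huinj
    rw [(hWmem u).mp hu, map_zero]
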